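/- (Theorem B, attracting case.) Let Ω ⊆ ℂ be open, f : ℂ → ℂ analytic on Ω with f(Ω) ⊆ Ω, let p ≥ 1 and a ∈ Ω satisfy f^{∘p}(a) = a, and suppose the multiplier λ := (f^{∘p})'(a) satisfies 0 < |λ| < 1. Let μ ∈ ℂ with μ^p = λ, and let Φ : ℂ → ℂ be analytic on Ω with Φ(f(z)) = μ·Φ(z) for all z ∈ Ω (Schröder equation) and Φ'(f^{∘j}(a)) ≠ 0 for every 0 ≤ j < p. Assume Ω is the basin of the cycle: for every z ∈ Ω there is 0 ≤ j < p with f^{∘(pn+j)}(z) → a as n → ∞. Then for every integer t ≥ 2 and every compact set K ⊆ Ω on which Φ' has no zeros, there exist C > 0 and N ∈ ℕ such that for all n ≥ N and all z ∈ K one has (f^{∘n})'(z) ≠ 0 and | (f^{∘n})^{(t)}(z) / (f^{∘n})'(z) − Φ^{(t)}(z) / Φ'(z) | ≤ C · |λ|^{n/p}. -/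

import Mathlib

open Filter Topology Set Metric

lemma analyticOnNhd_iteratedDeriv {h : ℂ → ℂ} {U : Set ℂ}
    (hh : AnalyticOnNhd ℂ h U) (t : ℕ) : AnalyticOnNhd ℂ (iteratedDeriv t h) U := by
  induction t with
  | zero => simpa [iteratedDeriv_zero] using hh
  | succ t ih => rw [iteratedDeriv_succ]; exact ih.deriv

lemma iteratedDeriv_two (h : ℂ → ℂ) : iteratedDeriv 2 h = deriv (deriv h) := by
  rw [show (2 : ℕ) = 1 + 1 from rfl, iteratedDeriv_succ, iteratedDeriv_one]

lemma cauchy_deriv_bound {h : ℂ → ℂ} {z : ℂ} {ε C : ℝ} (hε : 0 < ε)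
    (hd : DifferentiableOn ℂ h (closedBall z ε))
    (hC : ∀ w ∈ closedBall z ε, ‖h w‖ ≤ C) :
    ‖deriv h z‖ ≤ C / ε := by
  have hcl : DiffContOnCl ℂ h (ball z ε) := by
    refine ⟨hd.mono ball_subset_closedBall, ?_⟩
    rw [closure_ball z hε.ne']
    exact hd.continuousOn
  exact Complex.norm_deriv_le_of_forall_mem_sphere_norm_le hε hcl
    fun w hw => hC w (sphere_subset_closedBall hw)

lemma ratio_recursion {h : ℂ → ℂ} {U : Set ℂ}
    (hh : AnalyticOnNhd ℂ h U) {z : ℂ} (hz : z ∈ U) (h' : deriv h z ≠ 0) (s : ℕ) :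
    iteratedDeriv (s + 1) h z / deriv h z =
      deriv (fun w => iteratedDeriv s h w / deriv h w) z +
        (iteratedDeriv s h z / deriv h z) * (iteratedDeriv 2 h z / deriv h z) := by
  have d1 : DifferentiableAt ℂ (iteratedDeriv s h) z :=
    ((analyticOnNhd_iteratedDeriv hh s) z hz).differentiableAt
  have d2 : DifferentiableAt ℂ (deriv h) z := (hh.deriv z hz).differentiableAt
  have hdd : deriv (fun w => iteratedDeriv s h w / deriv h w) z =
      (deriv (iteratedDeriv s h) z * deriv h z -
        iteratedDeriv s h z * deriv (deriv h) z) / (deriv h z) ^ 2 := deriv_div d1 d2 h'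
  have e1 : deriv (iteratedDeriv s h) z = iteratedDeriv (s + 1) h z := by rw [iteratedDeriv_succ]
  have e2 : deriv (deriv h) z = iteratedDeriv 2 h z := by rw [iteratedDeriv_two]
  rw [hdd, e1, e2]
  field_simp
  ring

set_option maxHeartbeats 1000000 in
/-- Theorem B, attracting case. -/
theorem higher_deriv_ratio_approx_schroeder
    (Ω : Set ℂ) (hΩ : IsOpen Ω) (f : ℂ → ℂ)
    (hf : DifferentiableOn ℂ f Ω) (hmaps : Set.MapsTo f Ω Ω)
    (p : ℕ) (hp : 1 ≤ p) (a : ℂ) (ha : a ∈ Ω) (hfix : f^[p] a = a)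
    (hmult0 : 0 < ‖deriv (f^[p]) a‖)
    (hmult1 : ‖deriv (f^[p]) a‖ < 1)
    (μ : ℂ) (hμ : μ ^ p = deriv (f^[p]) a)
    (Φ : ℂ → ℂ) (hΦ : DifferentiableOn ℂ Φ Ω)
    (hSchroeder : ∀ z ∈ Ω, Φ (f z) = μ * Φ z)
    (hΦ' : ∀ j < p, deriv Φ (f^[j] a) ≠ 0)
    (hbasin : ∀ z ∈ Ω, ∃ j < p, Tendsto (fun n : ℕ => f^[p * n + j] z) atTop (nhds a)) :
    ∀ t : ℕ, 2 ≤ t → ∀ K : Set ℂ, K ⊆ Ω → IsCompact K →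
      (∀ z ∈ K, deriv Φ z ≠ 0) →
      ∃ C > 0, ∃ N : ℕ, ∀ n ≥ N, ∀ z ∈ K,
        deriv (f^[n]) z ≠ 0 ∧
        ‖iteratedDeriv t (f^[n]) z / deriv (f^[n]) z -
            iteratedDeriv t Φ z / deriv Φ z‖ ≤
          C * ‖deriv (f^[p]) a‖ ^ ((n : ℝ) / (p : ℝ)) := by
  intro t ht K hKΩ hK hKΦ'
  have hp0 : (0:ℕ) < p := hp
  set lam := deriv (f^[p]) a with hlamdef
  have hlam0 : lam ≠ 0 := fun h => by simp [h] at hmult0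
  have hμ0 : μ ≠ 0 := by
    intro h
    rw [h, zero_pow hp0.ne'] at hμ
    exact hlam0 hμ.symm
  have habsμ : ‖μ‖ < 1 := by
    by_contra h
    push_neg at h
    have h1 : (1:ℝ) ≤ ‖μ‖ ^ p := one_le_pow₀ h
    rw [← norm_pow, hμ] at h1
    linarith
  have habsμ0 : 0 < ‖μ‖ := by
    simpa using hμ0
  have hrpow : ∀ n : ℕ, ‖lam‖ ^ ((n : ℝ) / (p : ℝ)) = ‖μ‖ ^ n := by
    intro n
    have h1 : ‖lam‖ = ‖μ‖ ^ (p:ℕ) := by rw [← hμ, norm_pow]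
    rw [h1, ← Real.rpow_natCast (‖μ‖) p, ← Real.rpow_mul (norm_nonneg μ),
      mul_div_cancel₀ _ (by exact_mod_cast hp0.ne' : (p:ℝ) ≠ 0), Real.rpow_natCast]
  -- differentiability and analyticity of iterates
  have hfdn : ∀ n, DifferentiableOn ℂ (f^[n]) Ω := by
    intro n
    induction n with
    | zero => simpa using differentiableOn_id
    | succ n ih =>
      rw [Function.iterate_succ']
      exact hf.comp ih (hmaps.iterate n)
  have hfan : ∀ n, AnalyticOnNhd ℂ (f^[n]) Ω := fun n => (hfdn n).analyticOnNhd hΩ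
  have hΦa : AnalyticOnNhd ℂ Φ Ω := hΦ.analyticOnNhd hΩ
  -- functional equation for iterates
  have hcompn : ∀ n, ∀ z ∈ Ω, Φ (f^[n] z) = μ ^ n * Φ z := by
    intro n
    induction n with
    | zero => intro z _; simp
    | succ n ih =>
      intro z hz
      rw [Function.iterate_succ_apply', hSchroeder _ ((hmaps.iterate n) hz), ih z hz, pow_succ]
      ring
  -- Identity A
  have hA : ∀ n, ∀ z ∈ Ω, deriv Φ (f^[n] z) * deriv (f^[n]) z = μ ^ n * deriv Φ z := by
    intro n z hz
    have hgz : f^[n] z ∈ Ω := hmaps.iterate n hz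
    have hd1 : DifferentiableAt ℂ Φ (f^[n] z) := (hΦa _ hgz).differentiableAt
    have hd2 : DifferentiableAt ℂ (f^[n]) z := (hfan n z hz).differentiableAt
    have heq : (Φ ∘ f^[n]) =ᶠ[𝓝 z] fun w => μ ^ n * Φ w := by
      filter_upwards [hΩ.mem_nhds hz] with w hw
      exact hcompn n w hw
    calc deriv Φ (f^[n] z) * deriv (f^[n]) z = deriv (Φ ∘ f^[n]) z :=
          (deriv_comp z hd1 hd2).symm
      _ = deriv (fun w => μ ^ n * Φ w) z := heq.deriv_eq
      _ = μ ^ n * deriv Φ z := deriv_const_mul _ ((hΦa z hz).differentiableAt)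
  -- Identity B
  have hB : ∀ n, ∀ z ∈ Ω, iteratedDeriv 2 Φ (f^[n] z) * (deriv (f^[n]) z) ^ 2
      + deriv Φ (f^[n] z) * iteratedDeriv 2 (f^[n]) z = μ ^ n * iteratedDeriv 2 Φ z := by
    intro n z hz
    have hgz : f^[n] z ∈ Ω := hmaps.iterate n hz
    have hd2 : DifferentiableAt ℂ (f^[n]) z := (hfan n z hz).differentiableAt
    have hdΦ' : DifferentiableAt ℂ (deriv Φ) (f^[n] z) := (hΦa.deriv _ hgz).differentiableAt
    have hdg' : DifferentiableAt ℂ (deriv (f^[n])) z := ((hfan n).deriv z hz).differentiableAt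
    have hcompAt : DifferentiableAt ℂ (fun w => deriv Φ (f^[n] w)) z := hdΦ'.comp z hd2
    have heq : (fun w => deriv Φ (f^[n] w) * deriv (f^[n]) w) =ᶠ[𝓝 z]
        fun w => μ ^ n * deriv Φ w := by
      filter_upwards [hΩ.mem_nhds hz] with w hw
      exact hA n w hw
    have h1 : deriv (fun w => deriv Φ (f^[n] w) * deriv (f^[n]) w) z
        = μ ^ n * deriv (deriv Φ) z := by
      rw [heq.deriv_eq]
      exact deriv_const_mul _ ((hΦa.deriv z hz).differentiableAt)
    have h3 : deriv (fun w => deriv Φ (f^[n] w)) z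
        = deriv (deriv Φ) (f^[n] z) * deriv (f^[n]) z := by
      simpa [Function.comp_def] using deriv_comp z hdΦ' hd2
    have h2 : deriv (fun w => deriv Φ (f^[n] w) * deriv (f^[n]) w) z
        = deriv (deriv Φ) (f^[n] z) * deriv (f^[n]) z * deriv (f^[n]) z
          + deriv Φ (f^[n] z) * deriv (deriv (f^[n])) z := by
      rw [deriv_fun_mul hcompAt hdg', h3]
    simp only [iteratedDeriv_two]
    linear_combination h2.symm.trans h1
  -- the open set where deriv Φ does not vanish
  set U₀ : Set ℂ := Ω ∩ (deriv Φ) ⁻¹' {0}ᶜ with hU₀def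
  have hU₀open : IsOpen U₀ :=
    (hΦa.deriv.continuousOn).isOpen_inter_preimage hΩ isOpen_compl_singleton
  have hU₀Ω : U₀ ⊆ Ω := inter_subset_left
  have hU₀Φ : ∀ z ∈ U₀, deriv Φ z ≠ 0 := fun z hz => hz.2
  have hKU₀ : K ⊆ U₀ := fun z hz => ⟨hKΩ hz, hKΦ' z hz⟩
  have hg'ne : ∀ n, ∀ z ∈ U₀, deriv (f^[n]) z ≠ 0 ∧ deriv Φ (f^[n] z) ≠ 0 := by
    intro n z hz
    have hAz := hA n z (hU₀Ω hz)
    have hne : deriv Φ (f^[n] z) * deriv (f^[n]) z ≠ 0 := by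
      rw [hAz]
      exact mul_ne_zero (pow_ne_zero _ hμ0) (hU₀Φ z hz)
    exact ⟨fun h => hne (by rw [h, mul_zero]), fun h => hne (by rw [h, zero_mul])⟩
  -- base ratio identity
  have hΔ2 : ∀ n, ∀ z ∈ U₀,
      iteratedDeriv 2 (f^[n]) z / deriv (f^[n]) z - iteratedDeriv 2 Φ z / deriv Φ z
        = -(iteratedDeriv 2 Φ (f^[n] z) / deriv Φ (f^[n] z)) * deriv (f^[n]) z := by
    intro n z hz
    obtain ⟨hG, hP⟩ := hg'ne n z hz
    have hQ := hU₀Φ z hz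
    have eA := hA n z (hU₀Ω hz)
    have eB := hB n z (hU₀Ω hz)
    field_simp
    linear_combination deriv Φ z * eB - iteratedDeriv 2 Φ z * eA
  -- thickening parameters
  obtain ⟨δ, hδpos, hδsub⟩ := hK.exists_thickening_subset_open hU₀open hKU₀
  set ε : ℝ := δ / (t + 1) with hεdef
  have hεpos : 0 < ε := by positivity
  have hsubU₀ : cthickening ((t : ℝ) * ε) K ⊆ U₀ := by
    refine (cthickening_subset_thickening' hδpos ?_ K).trans hδsub
    rw [hεdef]
    have ht1 : (0:ℝ) < (t:ℝ) + 1 := by positivity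
    rw [mul_comm, div_mul_eq_mul_div, div_lt_iff₀ ht1]
    nlinarith [hδpos]
  set K₂ : Set ℂ := cthickening (((t : ℝ) - (2 : ℕ)) * ε) K with hK₂def
  have hK₂U₀ : K₂ ⊆ U₀ := by
    refine (cthickening_mono ?_ K).trans hsubU₀
    have : ((2:ℕ):ℝ) ≥ 0 := by positivity
    nlinarith [hεpos.le]
  have hK₂cpt : IsCompact K₂ := hK.cthickening
  have hK₂Ω : K₂ ⊆ Ω := hK₂U₀.trans hU₀Ω
  -- contraction near a
  have hfp_at : HasDerivAt (f^[p]) lam a :=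
    (((hfdn p) a ha).differentiableAt (hΩ.mem_nhds ha)).hasDerivAt
  set c' : ℝ := (1 + ‖lam‖) / 2 with hc'def
  have hc'1 : c' < 1 := by rw [hc'def]; linarith
  have hc'0 : 0 ≤ c' := by positivity
  have hcontr : ∀ᶠ z in 𝓝 a, dist (f^[p] z) a ≤ c' * dist z a := by
    have h1 := hasDerivAt_iff_isLittleO.mp hfp_at
    have h2 := h1.bound (show (0:ℝ) < (1 - ‖lam‖) / 2 by linarith)
    filter_upwards [h2] with z hz
    rw [dist_eq_norm, dist_eq_norm]
    have h3 : f^[p] z - a = (f^[p] z - f^[p] a - (z - a) • lam) + (z - a) • lam := by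
      rw [hfix]; ring
    calc ‖f^[p] z - a‖ ≤ ‖f^[p] z - f^[p] a - (z - a) • lam‖ + ‖(z - a) • lam‖ := by
          rw [h3]; exact norm_add_le _ _
      _ ≤ (1 - ‖lam‖) / 2 * ‖z - a‖ + ‖z - a‖ * ‖lam‖ := by
          rw [norm_smul]
          gcongr
      _ = c' * ‖z - a‖ := by rw [hc'def]; ring
  -- small ball with good properties
  have hVmem : ∀ᶠ z in 𝓝 a, (∀ j ∈ Iio p, f^[j] z ∈ U₀) := by
    rw [eventually_all_finite (finite_Iio p)]
    intro j hj
    have hcj : f^[j] a ∈ U₀ := ⟨hmaps.iterate j ha, hΦ' j hj⟩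
    have hcont : ContinuousAt (f^[j]) a :=
      (hfdn j).continuousOn.continuousAt (hΩ.mem_nhds ha)
    exact hcont (hU₀open.mem_nhds hcj)
  have hall : ∀ᶠ z in 𝓝 a,
      (∀ j ∈ Iio p, f^[j] z ∈ U₀) ∧ dist (f^[p] z) a ≤ c' * dist z a ∧ z ∈ Ω :=
    hVmem.and (hcontr.and (hΩ.eventually_mem ha))
  obtain ⟨r₁, hr₁, hrball⟩ := Metric.eventually_nhds_iff_ball.mp hall
  set r : ℝ := r₁ / 2 with hrdef
  have hr : 0 < r := by positivity
  have hrP : ∀ z ∈ closedBall a r,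
      (∀ j ∈ Iio p, f^[j] z ∈ U₀) ∧ dist (f^[p] z) a ≤ c' * dist z a ∧ z ∈ Ω := by
    intro z hz
    exact hrball z (lt_of_le_of_lt (mem_closedBall.mp hz) (by rw [hrdef]; linarith))
  have hrΩ : closedBall a r ⊆ Ω := fun z hz => (hrP z hz).2.2
  have hinv : ∀ z ∈ closedBall a r, f^[p] z ∈ closedBall a r := by
    intro z hz
    have h1 := (hrP z hz).2.1
    rw [mem_closedBall] at hz ⊢
    nlinarith [dist_nonneg (x := z) (y := a)]
  have hinvq : ∀ q, ∀ z ∈ closedBall a r, f^[p * q] z ∈ closedBall a r := by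
    intro q
    induction q with
    | zero => intro z hz; simpa using hz
    | succ q ih =>
      intro z hz
      rw [Nat.mul_succ, Function.iterate_add_apply]
      exact ih _ (hinv z hz)
  set L : Set ℂ := ⋃ j ∈ Iio p, f^[j] '' (closedBall a r) with hLdef
  have hLcpt : IsCompact L :=
    (finite_Iio p).isCompact_biUnion fun j _ =>
      (isCompact_closedBall a r).image_of_continuousOn ((hfdn j).continuousOn.mono hrΩ)
  have hLU₀ : L ⊆ U₀ := by
    intro w hw
    simp only [hLdef, mem_iUnion, mem_image] at hw
    obtain ⟨j, hj, z, hz, rfl⟩ := hw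
    exact (hrP z hz).1 j hj
  -- trapping
  have htrap1 : ∀ z m, f^[m] z ∈ closedBall a r → ∀ n, m ≤ n → f^[n] z ∈ L := by
    intro z m hm n hn
    obtain ⟨s, rfl⟩ := Nat.exists_eq_add_of_le hn
    set j := s % p with hjdef
    set q := s / p with hqdef
    have hs : j + p * q = s := Nat.mod_add_div s p
    have h1 : m + s = j + (p * q + m) := by rw [← hs]; ring
    rw [h1, Function.iterate_add_apply, Function.iterate_add_apply]
    have h2 : f^[p * q] (f^[m] z) ∈ closedBall a r := hinvq q _ hm
    have hjp : j ∈ Iio p := mem_Iio.mpr (Nat.mod_lt s hp0)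
    exact mem_biUnion hjp (mem_image_of_mem _ h2)
  -- cover K₂
  have hcov : ∀ z ∈ K₂, ∃ m : ℕ, {w | f^[m] w ∈ ball a r} ∈ 𝓝 z := by
    intro z hz
    obtain ⟨j, hj, htend⟩ := hbasin z (hK₂Ω hz)
    obtain ⟨n₁, hn₁⟩ := (htend.eventually_mem (ball_mem_nhds a hr)).exists
    refine ⟨p * n₁ + j, ?_⟩
    have hcont : ContinuousAt (f^[p * n₁ + j]) z :=
      (hfdn _).continuousOn.continuousAt (hΩ.mem_nhds (hK₂Ω hz))
    exact hcont (isOpen_ball.mem_nhds hn₁)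
  choose! m hm using hcov
  obtain ⟨fin, hfin⟩ := hK₂cpt.elim_nhds_subcover' (fun z hz => {w | f^[m z] w ∈ ball a r})
    (fun z hz => hm z hz)
  set N₀ : ℕ := fin.sup fun x => m x.1 with hN₀def
  have htrap : ∀ n, N₀ ≤ n → ∀ z ∈ K₂, f^[n] z ∈ L := by
    intro n hn z hz
    have := hfin hz
    simp only [mem_iUnion] at this
    obtain ⟨x, hx, hzx⟩ := this
    refine htrap1 z (m x.1) (ball_subset_closedBall hzx) n ?_
    exact le_trans (Finset.le_sup (f := fun x => m x.1) hx) hn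
  -- constants
  have hLΩ : L ⊆ Ω := hLU₀.trans hU₀Ω
  have hcontΦ' : ContinuousOn (deriv Φ) Ω := hΦa.deriv.continuousOn
  have hcontΦ2 : ContinuousOn (iteratedDeriv 2 Φ) Ω := (analyticOnNhd_iteratedDeriv hΦa 2).continuousOn
  obtain ⟨BQ₀, hBQ₀⟩ := hK₂cpt.exists_bound_of_continuousOn (hcontΦ'.mono hK₂Ω)
  set BQ : ℝ := |BQ₀| with hBQdef
  have hBQ0 : 0 ≤ BQ := abs_nonneg _
  have hBQ : ∀ z ∈ K₂, ‖deriv Φ z‖ ≤ BQ := fun z hz =>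
    le_trans (hBQ₀ z hz) (le_abs_self _)
  obtain ⟨BP₀, hBP₀⟩ := hLcpt.exists_bound_of_continuousOn
    ((hcontΦ'.mono hLΩ).inv₀ fun w hw => (hLU₀ hw).2)
  set BP : ℝ := |BP₀| with hBPdef
  have hBP0 : 0 ≤ BP := abs_nonneg _
  have hBP : ∀ w ∈ L, (‖deriv Φ w‖)⁻¹ ≤ BP := by
    intro w hw
    have := le_trans (hBP₀ w hw) (le_abs_self _)
    rwa [← norm_inv]
  obtain ⟨BL₀, hBL₀⟩ := hLcpt.exists_bound_of_continuousOn
    ((hcontΦ2.mono hLΩ).div (hcontΦ'.mono hLΩ) fun w hw => (hLU₀ hw).2)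
  set BL2 : ℝ := |BL₀| with hBL2def
  have hBL20 : 0 ≤ BL2 := abs_nonneg _
  have hBL2 : ∀ w ∈ L, ‖iteratedDeriv 2 Φ w / deriv Φ w‖ ≤ BL2 := fun w hw =>
    le_trans (hBL₀ w hw) (le_abs_self _)
  obtain ⟨BS₀, hBS₀⟩ := hK₂cpt.exists_bound_of_continuousOn
    (((hcontΦ2.mono hK₂Ω)).div (hcontΦ'.mono hK₂Ω) fun w hw => (hK₂U₀ hw).2)
  set BS2 : ℝ := |BS₀| with hBS2def
  have hBS20 : 0 ≤ BS2 := abs_nonneg _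
  have hBS2 : ∀ z ∈ K₂, ‖iteratedDeriv 2 Φ z / deriv Φ z‖ ≤ BS2 := fun z hz =>
    le_trans (hBS₀ z hz) (le_abs_self _)
  -- derivative decay
  have hg'bound : ∀ n, N₀ ≤ n → ∀ z ∈ K₂,
      ‖deriv (f^[n]) z‖ ≤ BQ * BP * ‖μ‖ ^ n := by
    intro n hn z hz
    have hzU := hK₂U₀ hz
    obtain ⟨hG, hP⟩ := hg'ne n z hzU
    have eA := hA n z (hU₀Ω hzU)
    have hform : deriv (f^[n]) z = μ ^ n * deriv Φ z * (deriv Φ (f^[n] z))⁻¹ := by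
      field_simp
      linear_combination eA
    rw [hform, norm_mul, norm_mul, norm_pow, norm_inv]
    calc ‖μ‖ ^ n * ‖deriv Φ z‖ * (‖deriv Φ (f^[n] z)‖)⁻¹
        ≤ ‖μ‖ ^ n * BQ * BP := by
          gcongr
          · exact hBQ z hz
          · exact hBP _ (htrap n hn z hz)
      _ = BQ * BP * ‖μ‖ ^ n := by ring
  -- base estimate
  have hC2b : ∀ n, N₀ ≤ n → ∀ z ∈ K₂,
      ‖iteratedDeriv 2 (f^[n]) z / deriv (f^[n]) z - iteratedDeriv 2 Φ z / deriv Φ z‖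
        ≤ BL2 * (BQ * BP) * ‖μ‖ ^ n := by
    intro n hn z hz
    rw [hΔ2 n z (hK₂U₀ hz), neg_mul, norm_neg, norm_mul]
    calc ‖iteratedDeriv 2 Φ (f^[n] z) / deriv Φ (f^[n] z)‖ * ‖deriv (f^[n]) z‖
        ≤ BL2 * (BQ * BP * ‖μ‖ ^ n) :=
          mul_le_mul (hBL2 _ (htrap n hn z hz)) (hg'bound n hn z hz)
            (norm_nonneg _) hBL20
      _ = BL2 * (BQ * BP) * ‖μ‖ ^ n := by ring
  set C2 : ℝ := BL2 * (BQ * BP) with hC2def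
  have hC20 : 0 ≤ C2 := by rw [hC2def]; positivity
  -- main induction on the order of the derivative
  have main : ∀ s : ℕ, 2 ≤ s → s ≤ t → ∃ C : ℝ, 0 < C ∧ ∀ n, N₀ ≤ n →
      ∀ z ∈ cthickening (((t : ℝ) - s) * ε) K,
      ‖iteratedDeriv s (f^[n]) z / deriv (f^[n]) z - iteratedDeriv s Φ z / deriv Φ z‖
        ≤ C * ‖μ‖ ^ n := by
    intro s hs
    induction s, hs using Nat.le_induction with
    | base =>
      intro _
      refine ⟨C2 + 1, by positivity, fun n hn z hz => le_trans (hC2b n hn z hz) ?_⟩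
      have hx0 : (0:ℝ) ≤ ‖μ‖ ^ n := pow_nonneg (norm_nonneg μ) n
      nlinarith
    | succ s hs2 ih =>
      intro hst
      obtain ⟨Cs, hCs0, hCs⟩ := ih (Nat.le_of_succ_le hst)
      obtain ⟨BSs₀, hBSs₀⟩ := hK₂cpt.exists_bound_of_continuousOn
        (((analyticOnNhd_iteratedDeriv hΦa s).continuousOn.mono hK₂Ω).div
          (hcontΦ'.mono hK₂Ω) fun w hw => (hK₂U₀ hw).2)
      set BSs : ℝ := |BSs₀| with hBSsdef
      have hBSs0 : 0 ≤ BSs := abs_nonneg _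
      have hBSs : ∀ z ∈ K₂, ‖iteratedDeriv s Φ z / deriv Φ z‖ ≤ BSs := fun z hz =>
        le_trans (hBSs₀ z hz) (le_abs_self _)
      have hCpos : 0 < Cs / ε + Cs * (C2 + BS2) + BSs * C2 + 1 := by
        have h₁ : 0 < Cs / ε := div_pos hCs0 hεpos
        have h₂ : 0 ≤ Cs * (C2 + BS2) := mul_nonneg hCs0.le (add_nonneg hC20 hBS20)
        have h₃ : 0 ≤ BSs * C2 := mul_nonneg hBSs0 hC20
        linarith
      refine ⟨Cs / ε + Cs * (C2 + BS2) + BSs * C2 + 1, hCpos, ?_⟩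
      intro n hn z hz
      have hscast : (2:ℝ) ≤ (s:ℝ) := by exact_mod_cast hs2
      have hs1t : ((s:ℝ) + 1) ≤ (t:ℝ) := by exact_mod_cast hst
      have hradle : ((t:ℝ) - (s + 1 : ℕ)) * ε ≤ ((t:ℝ) - s) * ε := by
        push_cast
        nlinarith [hεpos.le]
      have hzs : z ∈ cthickening (((t:ℝ) - s) * ε) K := cthickening_mono hradle K hz
      have hsK₂rad : ((t:ℝ) - s) * ε ≤ ((t:ℝ) - (2:ℕ)) * ε := by
        push_cast
        nlinarith [hεpos.le]
      have hzK₂ : z ∈ K₂ := cthickening_mono hsK₂rad K hzs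
      have hzU₀ : z ∈ U₀ := hK₂U₀ hzK₂
      obtain ⟨hG, hP⟩ := hg'ne n z hzU₀
      have hQ := hU₀Φ z hzU₀
      set Rg : ℂ → ℂ := fun w => iteratedDeriv s (f^[n]) w / deriv (f^[n]) w with hRgdef
      set RΦ : ℂ → ℂ := fun w => iteratedDeriv s Φ w / deriv Φ w with hRΦdef
      have hdRg : DifferentiableOn ℂ Rg U₀ :=
        DifferentiableOn.div
          (((analyticOnNhd_iteratedDeriv (hfan n) s).differentiableOn).mono hU₀Ω)
          (((hfan n).deriv.differentiableOn).mono hU₀Ω) fun w hw => (hg'ne n w hw).1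
      have hdRΦ : DifferentiableOn ℂ RΦ U₀ :=
        DifferentiableOn.div
          (((analyticOnNhd_iteratedDeriv hΦa s).differentiableOn).mono hU₀Ω)
          ((hΦa.deriv.differentiableOn).mono hU₀Ω) fun w hw => hU₀Φ w hw
      have hΔd : DifferentiableOn ℂ (fun w => Rg w - RΦ w) U₀ := hdRg.sub hdRΦ
      have hrecg := ratio_recursion (hfan n) (hU₀Ω hzU₀) hG s
      have hrecΦ := ratio_recursion hΦa (hU₀Ω hzU₀) hQ s
      have hdsub : deriv (fun w => Rg w - RΦ w) z = deriv Rg z - deriv RΦ z :=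
        deriv_sub (hdRg.differentiableAt (hU₀open.mem_nhds hzU₀))
          (hdRΦ.differentiableAt (hU₀open.mem_nhds hzU₀))
      have hkey : iteratedDeriv (s+1) (f^[n]) z / deriv (f^[n]) z
            - iteratedDeriv (s+1) Φ z / deriv Φ z
          = deriv (fun w => Rg w - RΦ w) z
            + (Rg z - RΦ z) * (iteratedDeriv 2 (f^[n]) z / deriv (f^[n]) z)
            + RΦ z * (iteratedDeriv 2 (f^[n]) z / deriv (f^[n]) z
                - iteratedDeriv 2 Φ z / deriv Φ z) := by
        rw [hrecg, hrecΦ, hdsub]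
        simp only [hRgdef, hRΦdef]
        ring
      rw [hkey]
      have hx0 : (0:ℝ) ≤ ‖μ‖ ^ n := pow_nonneg (norm_nonneg μ) n
      have hx1 : ‖μ‖ ^ n ≤ 1 := pow_le_one₀ (norm_nonneg μ) habsμ.le
      -- Cauchy estimate for the derivative of the difference
      have hrad : ε + ((t:ℝ) - (s + 1 : ℕ)) * ε = ((t:ℝ) - s) * ε := by push_cast; ring
      have hball : closedBall z ε ⊆ cthickening (((t:ℝ) - s) * ε) K := by
        have h1 : closedBall z ε ⊆ cthickening ε (cthickening (((t:ℝ) - (s + 1 : ℕ)) * ε) K) :=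
          closedBall_subset_cthickening hz ε
        have h2 : cthickening ε (cthickening (((t:ℝ) - (s + 1 : ℕ)) * ε) K)
            ⊆ cthickening (ε + ((t:ℝ) - (s + 1 : ℕ)) * ε) K :=
          cthickening_cthickening_subset hεpos.le
            (by push_cast; nlinarith [hεpos.le]) K
        rw [hrad] at h2
        exact h1.trans h2
      have hballU₀ : closedBall z ε ⊆ U₀ :=
        hball.trans ((cthickening_mono hsK₂rad K).trans hK₂U₀)
      have hcauchy : ‖deriv (fun w => Rg w - RΦ w) z‖
          ≤ Cs * ‖μ‖ ^ n / ε :=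
        cauchy_deriv_bound hεpos (hΔd.mono hballU₀) fun w hw => hCs n hn w (hball hw)
      have hXn : ‖Rg z - RΦ z‖ ≤ Cs * ‖μ‖ ^ n := hCs n hn z hzs
      have hΔ2b : ‖iteratedDeriv 2 (f^[n]) z / deriv (f^[n]) z
          - iteratedDeriv 2 Φ z / deriv Φ z‖ ≤ C2 * ‖μ‖ ^ n := hC2b n hn z hzK₂
      have hRg2 : ‖iteratedDeriv 2 (f^[n]) z / deriv (f^[n]) z‖ ≤ C2 + BS2 := by
        have h2 := hBS2 z hzK₂
        calc ‖iteratedDeriv 2 (f^[n]) z / deriv (f^[n]) z‖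
            ≤ ‖iteratedDeriv 2 (f^[n]) z / deriv (f^[n]) z
                - iteratedDeriv 2 Φ z / deriv Φ z‖
              + ‖iteratedDeriv 2 Φ z / deriv Φ z‖ := by
              simpa using norm_add_le (iteratedDeriv 2 (f^[n]) z / deriv (f^[n]) z
                - iteratedDeriv 2 Φ z / deriv Φ z) (iteratedDeriv 2 Φ z / deriv Φ z)
          _ ≤ C2 * ‖μ‖ ^ n + BS2 := add_le_add hΔ2b h2
          _ ≤ C2 + BS2 := by nlinarith
      have hRΦs : ‖RΦ z‖ ≤ BSs := hBSs z hzK₂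
      calc ‖deriv (fun w => Rg w - RΦ w) z
            + (Rg z - RΦ z) * (iteratedDeriv 2 (f^[n]) z / deriv (f^[n]) z)
            + RΦ z * (iteratedDeriv 2 (f^[n]) z / deriv (f^[n]) z
                - iteratedDeriv 2 Φ z / deriv Φ z)‖
          ≤ ‖deriv (fun w => Rg w - RΦ w) z‖
            + ‖(Rg z - RΦ z) * (iteratedDeriv 2 (f^[n]) z / deriv (f^[n]) z)‖
            + ‖RΦ z * (iteratedDeriv 2 (f^[n]) z / deriv (f^[n]) z
                - iteratedDeriv 2 Φ z / deriv Φ z)‖ := by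
            refine le_trans (norm_add_le _ _) ?_
            gcongr
            exact norm_add_le _ _
        _ ≤ Cs * ‖μ‖ ^ n / ε + (Cs * ‖μ‖ ^ n) * (C2 + BS2)
            + BSs * (C2 * ‖μ‖ ^ n) := by
            refine add_le_add (add_le_add hcauchy ?_) ?_
            · rw [norm_mul]
              exact mul_le_mul hXn hRg2 (norm_nonneg _) (by positivity)
            · rw [norm_mul]
              exact mul_le_mul hRΦs hΔ2b (norm_nonneg _) hBSs0
        _ = (Cs / ε + Cs * (C2 + BS2) + BSs * C2) * ‖μ‖ ^ n := by ring
        _ ≤ (Cs / ε + Cs * (C2 + BS2) + BSs * C2 + 1) * ‖μ‖ ^ n := by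
            exact mul_le_mul_of_nonneg_right (by linarith) hx0
  obtain ⟨C, hC0, hCmain⟩ := main t ht le_rfl
  refine ⟨C, hC0, N₀, fun n hn z hz => ⟨(hg'ne n z (hKU₀ hz)).1, ?_⟩⟩
  rw [hrpow n]
  exact hCmain n hn z (self_subset_cthickening _ hz)
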